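/- Let K, M, l be natural numbers with M ≥ 1 and (l+1)·M ≤ K, let S_1, …, S_{l+1} be pairwise disjoint subsets of Fin K each of cardinality M, let Δ be a uniformly distributed random variable on Fin K, and let W_j = 1 if Δ ∈ S_j and W_j = 0 otherwise, for j = 1, …, l+1. Then the conditional entropy satisfies H(W_{l+1} | (W_1, …, W_l)) = (1 − l·M/K) · H2(M/(K − l·M)). -/

import Mathlib

open MeasureTheory Real

/-- Shannon entropy (in nats) of a random variable `X` with values in a finite type:
`H(X) = ∑ₓ negMulLog (P(X = x))`. -/
noncomputable def entropy {Ω : Type*} [MeasurableSpace Ω] (P : Measure Ω)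
    {α : Type*} [Fintype α] (X : Ω → α) : ℝ :=
  ∑ x : α, Real.negMulLog (P (X ⁻¹' {x})).toReal

/-- Conditional entropy `H(X | Y) = H((X,Y)) - H(Y)`. -/
noncomputable def condEntropy {Ω : Type*} [MeasurableSpace Ω] (P : Measure Ω)
    {α β : Type*} [Fintype α] [Fintype β] (X : Ω → α) (Y : Ω → β) : ℝ :=
  entropy P (fun ω => (X ω, Y ω)) - entropy P Y

private lemma aux_prob {Ω : Type*} [MeasurableSpace Ω] (P : Measure Ω) [IsProbabilityMeasure P]
    {K : ℕ} (hK : 0 < K) (Δ : Ω → Fin K)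
    (hunif : ∀ x : Fin K, P (Δ ⁻¹' {x}) = (K : ENNReal)⁻¹) (A : Finset (Fin K)) :
    P (Δ ⁻¹' ↑A) = (A.card : ENNReal) * (K : ENNReal)⁻¹ := by
  have upper : ∀ B : Finset (Fin K), P (Δ ⁻¹' ↑B) ≤ (B.card : ENNReal) * (K : ENNReal)⁻¹ := by
    intro B
    have hU : Δ ⁻¹' ↑B = ⋃ x ∈ B, Δ ⁻¹' {x} := by ext ω; simp
    rw [hU]
    calc P (⋃ x ∈ B, Δ ⁻¹' {x}) ≤ ∑ x ∈ B, P (Δ ⁻¹' {x}) := measure_biUnion_finset_le _ _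
      _ = (B.card : ENNReal) * (K : ENNReal)⁻¹ := by
          simp [hunif, Finset.sum_const, nsmul_eq_mul]
  refine le_antisymm (upper A) ?_
  have key : (A.card : ENNReal) * (K : ENNReal)⁻¹ + (Aᶜ.card : ENNReal) * (K : ENNReal)⁻¹ = 1 := by
    rw [← add_mul, ← Nat.cast_add, Finset.card_add_card_compl]
    simp only [Fintype.card_fin]
    exact ENNReal.mul_inv_cancel (by exact_mod_cast hK.ne') (by simp)
  have h1 : (1 : ENNReal) ≤ P (Δ ⁻¹' ↑A) + (Aᶜ.card : ENNReal) * (K : ENNReal)⁻¹ := by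
    calc (1 : ENNReal) = P Set.univ := (measure_univ).symm
      _ ≤ P (Δ ⁻¹' ↑A ∪ Δ ⁻¹' ↑(Aᶜ)) := by
          apply measure_mono; intro ω _
          by_cases h : Δ ω ∈ A <;> simp [h]
      _ ≤ P (Δ ⁻¹' ↑A) + P (Δ ⁻¹' ↑(Aᶜ)) := measure_union_le _ _
      _ ≤ _ := add_le_add le_rfl (upper Aᶜ)
  rw [← key] at h1
  have hfin : (Aᶜ.card : ENNReal) * (K : ENNReal)⁻¹ ≠ ⊤ := by
    exact ENNReal.mul_ne_top (by simp) (by simp [hK.ne'])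
  exact (ENNReal.add_le_add_iff_right hfin).1 h1

private lemma aux_entropy {Ω : Type*} [MeasurableSpace Ω] (P : Measure Ω) [IsProbabilityMeasure P]
    {K : ℕ} (hK : 0 < K) (Δ : Ω → Fin K)
    (hunif : ∀ x : Fin K, P (Δ ⁻¹' {x}) = (K : ENNReal)⁻¹)
    {α : Type*} [Fintype α] [DecidableEq α] (g : Fin K → α) :
    entropy P (fun ω => g (Δ ω)) =
      ∑ x : Fin K, (K : ℝ)⁻¹ *
        (-Real.log (((Finset.univ.filter fun y => g y = g x).card : ℝ) / K)) := by
  unfold entropy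
  have hP : ∀ a : α, (P ((fun ω => g (Δ ω)) ⁻¹' {a})).toReal
      = ((Finset.univ.filter fun y => g y = a).card : ℝ) / K := by
    intro a
    have hpre : (fun ω => g (Δ ω)) ⁻¹' {a} = Δ ⁻¹' ↑(Finset.univ.filter fun y => g y = a) := by
      ext ω; simp
    rw [hpre, aux_prob P hK Δ hunif]
    rw [ENNReal.toReal_mul, ENNReal.toReal_inv]
    simp [div_eq_mul_inv]
  simp_rw [hP]
  rw [← Finset.sum_fiberwise Finset.univ g
    (fun x => (K : ℝ)⁻¹ * (-Real.log (((Finset.univ.filter fun y => g y = g x).card : ℝ) / K)))]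
  refine Finset.sum_congr rfl fun a _ => ?_
  have : ∀ x ∈ Finset.univ.filter fun y => g y = a,
      (K : ℝ)⁻¹ * (-Real.log (((Finset.univ.filter fun y => g y = g x).card : ℝ) / K))
        = (K : ℝ)⁻¹ * (-Real.log (((Finset.univ.filter fun y => g y = a).card : ℝ) / K)) := by
    intro x hx
    rw [(Finset.mem_filter.1 hx).2]
  rw [Finset.sum_congr rfl this, Finset.sum_const, nsmul_eq_mul]
  rw [Real.negMulLog]
  set c := ((Finset.univ.filter fun y => g y = a).card : ℝ)
  rw [div_eq_mul_inv]
  ring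

private lemma aux_arith (k m a r : ℝ) (hk : 0 < k) (hm : 0 < m) (ha : 0 < a) (hr : 0 ≤ r)
    (har : a = m + r) :
    r * (k⁻¹ * (-Real.log (r / k)) - k⁻¹ * (-Real.log (a / k)))
      + m * (k⁻¹ * (-Real.log (m / k)) - k⁻¹ * (-Real.log (a / k)))
      = (a / k) * Real.binEntropy (m / a) := by
  have ha' : a ≠ 0 := ha.ne'
  have hk' : k ≠ 0 := hk.ne'
  have h1 : 1 - m / a = r / a := by field_simp [har]; linarith
  rw [Real.binEntropy_eq_negMulLog_add_negMulLog_one_sub, h1]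
  simp only [Real.negMulLog]
  have hm1 : Real.log (m / k) = Real.log m - Real.log k := Real.log_div hm.ne' hk'
  have ha1 : Real.log (a / k) = Real.log a - Real.log k := Real.log_div ha' hk'
  have hma : Real.log (m / a) = Real.log m - Real.log a := Real.log_div hm.ne' ha'
  rcases eq_or_lt_of_le hr with h0 | h0
  · rw [← h0]
    simp only [zero_div, Real.log_zero, zero_mul, neg_zero, mul_zero, zero_mul, add_zero,
      zero_add, zero_sub, zero_mul, sub_zero]
    rw [hm1, ha1, hma]
    field_simp
    ring
  · have hr1 : Real.log (r / k) = Real.log r - Real.log k := Real.log_div h0.ne' hk'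
    have hra : Real.log (r / a) = Real.log r - Real.log a := Real.log_div h0.ne' ha'
    rw [hm1, ha1, hma, hr1, hra]
    field_simp
    ring

/-- **Conditional entropy of one more disjoint search indicator.** Let `Δ` be uniform on
`Fin K`, and let `S 1, …, S (l+1)` be pairwise disjoint subsets of `Fin K`, each of
cardinality `M ≥ 1`, with `(l+1)·M ≤ K`. With `W j = 1` iff `Δ ∈ S j`,
`H(W_{l+1} | (W_1, …, W_l)) = (1 - l·M/K) · H₂(M/(K - l·M))`. -/
theorem condEntropy_disjoint_indicators
    (Ω : Type*) [Fintype Ω] [MeasurableSpace Ω] (P : Measure Ω) [IsProbabilityMeasure P]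
    (K M l : ℕ) (hM : 1 ≤ M) (hlM : (l + 1) * M ≤ K)
    (S : Fin (l + 1) → Finset (Fin K))
    (hcard : ∀ j, (S j).card = M)
    (hdisj : ∀ i j, i ≠ j → Disjoint (S i) (S j))
    (Δ : Ω → Fin K)
    (hunif : ∀ x : Fin K, P (Δ ⁻¹' {x}) = (K : ENNReal)⁻¹) :
    condEntropy P (fun ω => if Δ ω ∈ S (Fin.last l) then (1 : Fin 2) else 0)
        (fun ω => fun j : Fin l => if Δ ω ∈ S j.castSucc then (1 : Fin 2) else 0)
      = (1 - (l : ℝ) * M / K) * Real.binEntropy ((M : ℝ) / ((K : ℝ) - l * M)) := by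
  classical
  have hK0 : 0 < K := lt_of_lt_of_le (Nat.mul_pos (Nat.succ_pos l) hM) hlM
  have hKr : (0 : ℝ) < K := by exact_mod_cast hK0
  have hlMK : l * M ≤ K := le_trans (Nat.mul_le_mul_right M (Nat.le_succ l)) hlM
  have huniq : ∀ (x : Fin K) (i j : Fin (l + 1)), x ∈ S i → x ∈ S j → i = j := by
    intro x i j hi hj
    by_contra h
    exact (Finset.disjoint_left.1 (hdisj i j h)) hi hj
  -- indicator functions on Fin K
  set u : Fin K → Fin 2 := fun x => if x ∈ S (Fin.last l) then 1 else 0 with hu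
  set w : Fin K → (Fin l → Fin 2) := fun x => fun j => if x ∈ S j.castSucc then 1 else 0 with hw
  set g : Fin K → Fin 2 × (Fin l → Fin 2) := fun x => (u x, w x) with hg
  have hind : ∀ (p q : Prop) (hp : Decidable p) (hq : Decidable q),
      ((if p then (1 : Fin 2) else 0) = (if q then (1 : Fin 2) else 0)) ↔ (p ↔ q) := by
    intro p q hp hq
    by_cases h1 : p <;> by_cases h2 : q <;> simp [h1, h2]
  have hwiff : ∀ y x : Fin K,
      w y = w x ↔ ∀ i : Fin l, (y ∈ S i.castSucc ↔ x ∈ S i.castSucc) := by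
    intro y x
    simp only [hw, funext_iff]
    exact forall_congr' fun i => hind _ _ _ _
  have hgiff : ∀ y x : Fin K, g y = g x ↔ ∀ j : Fin (l + 1), (y ∈ S j ↔ x ∈ S j) := by
    intro y x
    simp only [hg, hu, hw, Prod.mk.injEq, funext_iff]
    constructor
    · rintro ⟨h1, h2⟩ j
      rcases Fin.eq_castSucc_or_eq_last j with ⟨i, rfl⟩ | rfl
      · exact (hind _ _ _ _).1 (h2 i)
      · exact (hind _ _ _ _).1 h1
    · intro h
      exact ⟨(hind _ _ _ _).2 (h _), fun i => (hind _ _ _ _).2 (h _)⟩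
  -- fiber identification
  have fibG : ∀ (x : Fin K) (j : Fin (l + 1)), x ∈ S j →
      (Finset.univ.filter fun y => g y = g x) = S j := by
    intro x j hx
    ext y
    simp only [Finset.mem_filter, Finset.mem_univ, true_and, hgiff]
    constructor
    · intro h; exact (h j).2 hx
    · intro hy i
      constructor
      · intro hyi; rw [huniq y i j hyi hy]; exact hx
      · intro hxi; rw [huniq x i j hxi hx]; exact hy
  have fibW : ∀ (x : Fin K) (j : Fin l), x ∈ S j.castSucc →
      (Finset.univ.filter fun y => w y = w x) = S j.castSucc := by
    intro x j hx
    ext y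
    simp only [Finset.mem_filter, Finset.mem_univ, true_and, hwiff]
    constructor
    · intro h; exact (h j).2 hx
    · intro hy i
      constructor
      · intro hyi; rw [huniq y i.castSucc j.castSucc hyi hy]; exact hx
      · intro hxi; rw [huniq x i.castSucc j.castSucc hxi hx]; exact hy
  set T : Finset (Fin K) := Finset.univ.biUnion (fun i : Fin l => S i.castSucc) with hT
  set A : Finset (Fin K) := Finset.univ.biUnion (fun j : Fin (l + 1) => S j) with hA
  have hmemT : ∀ x : Fin K, x ∈ T ↔ ∃ i : Fin l, x ∈ S i.castSucc := by
    intro x; simp [hT]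
  have hmemA : ∀ x : Fin K, x ∈ A ↔ ∃ j : Fin (l + 1), x ∈ S j := by
    intro x; simp [hA]
  have fibW0 : ∀ x : Fin K, x ∉ T → (Finset.univ.filter fun y => w y = w x) = Tᶜ := by
    intro x hx
    have hx' : ∀ i : Fin l, x ∉ S i.castSucc := by
      intro i hxi; exact hx ((hmemT x).2 ⟨i, hxi⟩)
    ext y
    simp only [Finset.mem_filter, Finset.mem_univ, true_and, hwiff, Finset.mem_compl, hmemT,
      not_exists]
    constructor
    · intro h i hyi; exact hx' i ((h i).1 hyi)
    · intro h i; simp [h i, hx' i]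
  have fibG0 : ∀ x : Fin K, x ∉ A → (Finset.univ.filter fun y => g y = g x) = Aᶜ := by
    intro x hx
    have hx' : ∀ j : Fin (l + 1), x ∉ S j := by
      intro j hxj; exact hx ((hmemA x).2 ⟨j, hxj⟩)
    ext y
    simp only [Finset.mem_filter, Finset.mem_univ, true_and, hgiff, Finset.mem_compl, hmemA,
      not_exists]
    constructor
    · intro h j hyj; exact hx' j ((h j).1 hyj)
    · intro h j; simp [h j, hx' j]
  have hTcard : T.card = l * M := by
    rw [hT, Finset.card_biUnion]
    · simp [hcard, Finset.sum_const, Finset.card_univ, mul_comm]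
    · intro i _ j _ hij
      exact hdisj _ _ (fun h => hij (Fin.castSucc_injective _ h))
  have hAcard : A.card = (l + 1) * M := by
    rw [hA, Finset.card_biUnion]
    · simp [hcard, Finset.sum_const, Finset.card_univ, mul_comm]
    · intro i _ j _ hij; exact hdisj _ _ hij
  have hTc : ((Tᶜ.card : ℕ) : ℝ) = (K : ℝ) - l * M := by
    rw [Finset.card_compl, hTcard, Fintype.card_fin, Nat.cast_sub hlMK]
    push_cast; ring
  have hAc : ((Aᶜ.card : ℕ) : ℝ) = (K : ℝ) - (l + 1) * M := by
    rw [Finset.card_compl, hAcard, Fintype.card_fin, Nat.cast_sub hlM]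
    push_cast; ring
  -- entropies as sums over Fin K
  have h1 : entropy P (fun ω =>
      ((if Δ ω ∈ S (Fin.last l) then (1 : Fin 2) else 0),
        fun j : Fin l => if Δ ω ∈ S j.castSucc then (1 : Fin 2) else 0))
      = ∑ x : Fin K, (K : ℝ)⁻¹ *
          (-Real.log (((Finset.univ.filter fun y => g y = g x).card : ℝ) / K)) :=
    aux_entropy P hK0 Δ hunif g
  have h2 : entropy P (fun ω => fun j : Fin l => if Δ ω ∈ S j.castSucc then (1 : Fin 2) else 0)
      = ∑ x : Fin K, (K : ℝ)⁻¹ *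
          (-Real.log (((Finset.univ.filter fun y => w y = w x).card : ℝ) / K)) :=
    aux_entropy P hK0 Δ hunif w
  have hceq : condEntropy P (fun ω => if Δ ω ∈ S (Fin.last l) then (1 : Fin 2) else 0)
        (fun ω => fun j : Fin l => if Δ ω ∈ S j.castSucc then (1 : Fin 2) else 0)
      = (∑ x : Fin K, (K : ℝ)⁻¹ *
          (-Real.log (((Finset.univ.filter fun y => g y = g x).card : ℝ) / K)))
        - ∑ x : Fin K, (K : ℝ)⁻¹ *
          (-Real.log (((Finset.univ.filter fun y => w y = w x).card : ℝ) / K)) := by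
    rw [← h1, ← h2]; rfl
  rw [hceq, ← Finset.sum_sub_distrib]
  set f : Fin K → ℝ := fun x =>
      (K : ℝ)⁻¹ * (-Real.log (((Finset.univ.filter fun y => g y = g x).card : ℝ) / K))
        - (K : ℝ)⁻¹ * (-Real.log (((Finset.univ.filter fun y => w y = w x).card : ℝ) / K))
    with hf
  rw [← Finset.sum_add_sum_compl T f]
  have hTzero : ∑ x ∈ T, f x = 0 := by
    refine Finset.sum_eq_zero fun x hx => ?_
    obtain ⟨i, hxi⟩ := (hmemT x).1 hx
    rw [hf]
    simp only
    rw [fibG x i.castSucc hxi, fibW x i hxi, sub_self]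
  have hUsub : S (Fin.last l) ⊆ Tᶜ := by
    intro x hx
    rw [Finset.mem_compl, hmemT]
    rintro ⟨i, hxi⟩
    exact (Finset.disjoint_left.1 (hdisj i.castSucc (Fin.last l)
      (Fin.ne_last_of_lt (Fin.castSucc_lt_last i)))) hxi hx
  rw [← Finset.sum_sdiff hUsub]
  have hUval : ∑ x ∈ S (Fin.last l), f x
      = (M : ℝ) * ((K : ℝ)⁻¹ * (-Real.log ((M : ℝ) / K))
          - (K : ℝ)⁻¹ * (-Real.log (((K : ℝ) - l * M) / K))) := by
    have hconst : ∀ x ∈ S (Fin.last l), f x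
        = (K : ℝ)⁻¹ * (-Real.log ((M : ℝ) / K))
          - (K : ℝ)⁻¹ * (-Real.log (((K : ℝ) - l * M) / K)) := by
      intro x hx
      have hxT : x ∉ T := by
        have := hUsub hx; rwa [Finset.mem_compl] at this
      rw [hf]
      simp only
      rw [fibG x (Fin.last l) hx, fibW0 x hxT, hcard, hTc]
    rw [Finset.sum_congr rfl hconst, Finset.sum_const, hcard, nsmul_eq_mul]
  have hRcard : ((Tᶜ \ S (Fin.last l)).card : ℝ) = (K : ℝ) - (l + 1) * M := by
    rw [Finset.card_sdiff_of_subset hUsub, Nat.cast_sub (Finset.card_le_card hUsub), hTc, hcard]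
    ring
  have hRval : ∑ x ∈ Tᶜ \ S (Fin.last l), f x
      = ((K : ℝ) - (l + 1) * M) * ((K : ℝ)⁻¹ * (-Real.log (((K : ℝ) - (l + 1) * M) / K))
          - (K : ℝ)⁻¹ * (-Real.log (((K : ℝ) - l * M) / K))) := by
    have hconst : ∀ x ∈ Tᶜ \ S (Fin.last l), f x
        = (K : ℝ)⁻¹ * (-Real.log (((K : ℝ) - (l + 1) * M) / K))
          - (K : ℝ)⁻¹ * (-Real.log (((K : ℝ) - l * M) / K)) := by
      intro x hx
      rw [Finset.mem_sdiff, Finset.mem_compl] at hx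
      obtain ⟨hxT, hxU⟩ := hx
      have hxA : x ∉ A := by
        rw [hmemA]
        rintro ⟨j, hxj⟩
        rcases Fin.eq_castSucc_or_eq_last j with ⟨i, rfl⟩ | rfl
        · exact hxT ((hmemT x).2 ⟨i, hxj⟩)
        · exact hxU hxj
      rw [hf]
      simp only
      rw [fibG0 x hxA, fibW0 x hxT, hAc, hTc]
    rw [Finset.sum_congr rfl hconst, Finset.sum_const, nsmul_eq_mul, hRcard]
  rw [hTzero, hUval, hRval, zero_add]
  -- final arithmetic
  have hMr : (0 : ℝ) < (M : ℝ) := by exact_mod_cast hM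
  have har : (K : ℝ) - l * M = (M : ℝ) + ((K : ℝ) - (l + 1) * M) := by ring
  have hrr : (0 : ℝ) ≤ (K : ℝ) - (l + 1) * M := by
    have : ((l + 1) * M : ℝ) ≤ K := by exact_mod_cast hlM
    linarith
  have haa : (0 : ℝ) < (K : ℝ) - l * M := by rw [har]; linarith
  have hq : 1 - (l : ℝ) * M / K = ((K : ℝ) - l * M) / K := by field_simp
  rw [hq, ← aux_arith (K : ℝ) (M : ℝ) ((K : ℝ) - l * M) ((K : ℝ) - (l + 1) * M)
    hKr hMr haa hrr har]
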